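/- (Proposition 3) Fix I ∈ ℕ, q > 0, η > 0, L > 0, δ > 0, and if q ≠ 1 assume there is 𝔤 > 0 with 1 − 2|1−q|η^{-1}L ≥ 𝔤. Let N_t, N_x ∈ ℕ, Δt, Δx = 1/N_x > 0, and suppose the data satisfy 0 ≤ U_{i,k,l} ≤ L for all i ∈ {1,…,I}, k ∈ {0,…,N_t−1}, l ∈ {1,…,N_x}. If Δt ≤ 1/(1+δ), then the values Φ^{(i)}_{k,l} produced by the backward finite difference scheme satisfy 0 ≤ Φ^{(i)}_{k,l} ≤ L for all i ∈ {1,…,I}, k ∈ {0,1,…,N_t}, and l ∈ {1,…,N_x}. -/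

import Mathlib

open Real

noncomputable section

/-- Tsallis deformed exponential `exp_q`. -/
noncomputable def texp (q z : ℝ) : ℝ :=
  if q = 1 then Real.exp z else (max (1 + (1 - q) * z) 0) ^ ((1:ℝ) / (1 - q))

/-- Tsallis deformed logarithm `ln_q`. -/
noncomputable def tlog (q y : ℝ) : ℝ :=
  if q = 1 then Real.log y else (y ^ (1 - q) - 1) / (1 - q)

lemma texp_eq_of_pos {q z : ℝ} (hq : q ≠ 1) (hz : 0 < 1 + (1 - q) * z) :
    texp q z = (1 + (1 - q) * z) ^ ((1:ℝ) / (1 - q)) := by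
  simp [texp, hq, max_eq_left hz.le]

lemma texp_pos {q z : ℝ} (hz : q ≠ 1 → 0 < 1 + (1 - q) * z) : 0 < texp q z := by
  by_cases hq : q = 1
  · simp [texp, hq, Real.exp_pos]
  · rw [texp_eq_of_pos hq (hz hq)]
    exact Real.rpow_pos_of_pos (hz hq) _

lemma tlog_texp {q z : ℝ} (hz : q ≠ 1 → 0 < 1 + (1 - q) * z) :
    tlog q (texp q z) = z := by
  by_cases hq : q = 1
  · simp [texp, tlog, hq]
  · have hr : (1 : ℝ) - q ≠ 0 := sub_ne_zero.2 (Ne.symm hq)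
    have h := hz hq
    rw [texp_eq_of_pos hq h, tlog, if_neg hq, ← Real.rpow_mul h.le,
      one_div, inv_mul_cancel₀ hr, Real.rpow_one]
    field_simp
    ring

lemma texp_mono {q z₁ z₂ : ℝ} (h1 : q ≠ 1 → 0 < 1 + (1 - q) * z₁)
    (h2 : q ≠ 1 → 0 < 1 + (1 - q) * z₂) (h12 : z₁ ≤ z₂) :
    texp q z₁ ≤ texp q z₂ := by
  by_cases hq : q = 1
  · simp only [texp, if_pos hq]
    exact Real.exp_le_exp.2 h12
  · rw [texp_eq_of_pos hq (h1 hq), texp_eq_of_pos hq (h2 hq)]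
    rcases lt_trichotomy (1 - q) 0 with hr | hr | hr
    · exact Real.rpow_le_rpow_of_nonpos (h2 hq) (by nlinarith)
        (by rw [one_div]; exact inv_nonpos.2 hr.le)
    · exact absurd (by linarith : q = 1) hq
    · exact Real.rpow_le_rpow (h1 hq).le (by nlinarith) (by positivity)

lemma tlog_mono {q y₁ y₂ : ℝ} (hy1 : 0 < y₁) (h12 : y₁ ≤ y₂) :
    tlog q y₁ ≤ tlog q y₂ := by
  by_cases hq : q = 1
  · simp only [tlog, if_pos hq]
    exact Real.log_le_log hy1 h12
  · rw [tlog, tlog, if_neg hq, if_neg hq, div_eq_mul_inv, div_eq_mul_inv]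
    rcases lt_trichotomy (1 - q) 0 with hr | hr | hr
    · have h := Real.rpow_le_rpow_of_nonpos hy1 h12 hr.le
      exact mul_le_mul_of_nonpos_right (by linarith) (inv_nonpos.2 hr.le)
    · exact absurd (by linarith : q = 1) hq
    · have h := Real.rpow_le_rpow hy1.le h12 hr.le
      exact mul_le_mul_of_nonneg_right (by linarith) (inv_nonneg.2 hr.le)

set_option maxHeartbeats 1000000 in
theorem discrete_hjb_bounds (I Nt Nx : ℕ) (q η L δ Δt Δx : ℝ)
    (hq : 0 < q) (hη : 0 < η) (hL : 0 < L) (hδ : 0 < δ)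
    (hA2 : q ≠ 1 → ∃ g > 0, 1 - 2 * |1 - q| * η⁻¹ * L ≥ g)
    (hNx : 0 < Nx) (hΔx : Δx = 1 / (Nx : ℝ)) (hΔt : 0 < Δt)
    (hΔt' : Δt ≤ 1 / (1 + δ))
    (U : Fin I → ℕ → Fin Nx → ℝ)
    (hU : ∀ (i : Fin I) (k : ℕ) (l : Fin Nx), k < Nt → 0 ≤ U i k l ∧ U i k l ≤ L)
    (Φ : Fin I → ℕ → Fin Nx → ℝ)
    (hterm : ∀ (i : Fin I) (l : Fin Nx), Φ i Nt l = 0)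
    (hrec : ∀ (i : Fin I) (k : ℕ) (l : Fin Nx), k < Nt →
      Φ i k l = Φ i (k+1) l + Δt *
        (η * tlog q (∑ m, texp q (η⁻¹ * (Φ i (k+1) m - Φ i (k+1) l)) * Δx)
          - δ * Φ i (k+1) l + δ * U i k l)) :
    ∀ (i : Fin I) (k : ℕ) (l : Fin Nx), k ≤ Nt → 0 ≤ Φ i k l ∧ Φ i k l ≤ L := by
  have hinv : 0 < η⁻¹ := inv_pos.2 hη
  have hNx' : (0:ℝ) < (Nx : ℝ) := by exact_mod_cast hNx
  have hΔxpos : 0 < Δx := by rw [hΔx]; positivity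
  have h1δ : (0:ℝ) < 1 + δ := by linarith
  have hmain : Δt * (1 + δ) ≤ 1 := by
    rw [le_div_iff₀ h1δ] at hΔt'; exact hΔt'
  -- positivity of 1 + (1-q) z for small z
  have hpos : ∀ z : ℝ, |z| ≤ η⁻¹ * L → q ≠ 1 → 0 < 1 + (1 - q) * z := by
    intro z hz hq1
    obtain ⟨g, hg, hgle⟩ := hA2 hq1
    have habs : |(1 - q) * z| ≤ |1 - q| * (η⁻¹ * L) := by
      rw [abs_mul]
      exact mul_le_mul_of_nonneg_left hz (abs_nonneg _)
    have hlt : |(1 - q) * z| < 1 := by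
      nlinarith [abs_nonneg ((1 - q) * z), abs_nonneg (1 - q),
        mul_nonneg (abs_nonneg (1 - q)) (mul_nonneg hinv.le hL.le)]
    have := (abs_lt.mp hlt).1
    linarith
  -- sum of a constant times Δx over Fin Nx
  have hsum_const : ∀ c : ℝ, (∑ _m : Fin Nx, c * Δx) = c := by
    intro c
    rw [Finset.sum_const, Finset.card_univ, Fintype.card_fin, nsmul_eq_mul, hΔx]
    field_simp
  intro i
  suffices H : ∀ d k, k + d = Nt → ∀ l, 0 ≤ Φ i k l ∧ Φ i k l ≤ L by
    intro k l hk
    exact H (Nt - k) k (by omega) l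
  intro d
  induction d with
  | zero =>
    intro k hk l
    have : k = Nt := by omega
    rw [this, hterm i l]
    exact ⟨le_refl 0, hL.le⟩
  | succ d ih =>
    intro k hk l
    have hkNt : k < Nt := by omega
    have IH : ∀ m, 0 ≤ Φ i (k+1) m ∧ Φ i (k+1) m ≤ L := ih (k+1) (by omega)
    set A : ℝ := η⁻¹ * (0 - Φ i (k+1) l) with hAdef
    set B : ℝ := η⁻¹ * (L - Φ i (k+1) l) with hBdef
    have hPl := IH l
    have hAabs : |A| ≤ η⁻¹ * L := by
      rw [abs_le]; constructor <;> [nlinarith; nlinarith]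
    have hBabs : |B| ≤ η⁻¹ * L := by
      rw [abs_le]; constructor <;> [nlinarith; nlinarith]
    have haabs : ∀ m : Fin Nx, |η⁻¹ * (Φ i (k+1) m - Φ i (k+1) l)| ≤ η⁻¹ * L := by
      intro m
      have := IH m
      rw [abs_le]; constructor <;> [nlinarith; nlinarith]
    have hApos := hpos A hAabs
    have hBpos := hpos B hBabs
    have hampos : ∀ m : Fin Nx, q ≠ 1 →
        0 < 1 + (1 - q) * (η⁻¹ * (Φ i (k+1) m - Φ i (k+1) l)) :=
      fun m => hpos _ (haabs m)
    have hAa : ∀ m : Fin Nx, A ≤ η⁻¹ * (Φ i (k+1) m - Φ i (k+1) l) := by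
      intro m
      have := (IH m).1
      apply mul_le_mul_of_nonneg_left _ hinv.le
      linarith
    have haB : ∀ m : Fin Nx, η⁻¹ * (Φ i (k+1) m - Φ i (k+1) l) ≤ B := by
      intro m
      have := (IH m).2
      apply mul_le_mul_of_nonneg_left _ hinv.le
      linarith
    set S : ℝ := ∑ m, texp q (η⁻¹ * (Φ i (k+1) m - Φ i (k+1) l)) * Δx with hSdef
    have hlow : texp q A ≤ S := by
      rw [← hsum_const (texp q A), hSdef]
      exact Finset.sum_le_sum fun m _ =>
        mul_le_mul_of_nonneg_right (texp_mono hApos (hampos m) (hAa m)) hΔxpos.le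
    have hhigh : S ≤ texp q B := by
      rw [← hsum_const (texp q B), hSdef]
      exact Finset.sum_le_sum fun m _ =>
        mul_le_mul_of_nonneg_right (texp_mono (hampos m) hBpos (haB m)) hΔxpos.le
    have hSpos : 0 < S := lt_of_lt_of_le (texp_pos hApos) hlow
    have hT1 : A ≤ tlog q S := by
      rw [← tlog_texp hApos]
      exact tlog_mono (texp_pos hApos) hlow
    have hT2 : tlog q S ≤ B := by
      rw [← tlog_texp hBpos]
      exact tlog_mono hSpos hhigh
    have hηA : η * A = 0 - Φ i (k+1) l := by
      rw [hAdef, ← mul_assoc, mul_inv_cancel₀ hη.ne', one_mul]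
    have hηB : η * B = L - Φ i (k+1) l := by
      rw [hBdef, ← mul_assoc, mul_inv_cancel₀ hη.ne', one_mul]
    have hX1 : 0 - Φ i (k+1) l ≤ η * tlog q S := by
      rw [← hηA]; exact mul_le_mul_of_nonneg_left hT1 hη.le
    have hX2 : η * tlog q S ≤ L - Φ i (k+1) l := by
      rw [← hηB]; exact mul_le_mul_of_nonneg_left hT2 hη.le
    have hUk := hU i k l hkNt
    rw [hrec i k l hkNt, ← hSdef]
    constructor
    · linarith [mul_le_mul_of_nonneg_left hX1 hΔt.le,
        mul_nonneg (mul_nonneg hΔt.le hδ.le) hUk.1,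
        mul_nonneg hPl.1 (by linarith : (0:ℝ) ≤ 1 - Δt * (1 + δ))]
    · linarith [mul_le_mul_of_nonneg_left hX2 hΔt.le,
        mul_le_mul_of_nonneg_left hUk.2 (mul_nonneg hΔt.le hδ.le),
        mul_nonneg (by linarith [hPl.2] : (0:ℝ) ≤ L - Φ i (k+1) l)
          (by linarith : (0:ℝ) ≤ 1 - Δt * (1 + δ))]

end
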